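/- Let g : (Fin 3 → Bool) → Fin 3 be the function determined by the set of white (true) positions of its argument as follows (positions 0-indexed): ∅ ↦ 0, {0} ↦ 0, {1} ↦ 2, {0,1} ↦ 0, {2} ↦ 1, {0,2} ↦ 1, {1,2} ↦ 2, {0,1,2} ↦ 0. Then for every p ∈ [0,1], the symmetric 3-hat strategy (g, g) has win probability 3p²q⁴ + 6p³q³ + 8p⁴q² + 4p⁵q + p⁶ = 3p² − 6p³ + 8p⁴ − 6p⁵ + 2p⁶, where q = 1 − p. -/

import Mathlib

open MeasureTheory ENNReal

/-- The Bernoulli(`p`) measure on `Bool` (`true` = white with probability `p`). -/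
noncomputable def bern (p : ℝ) : Measure Bool :=
  ENNReal.ofReal p • Measure.dirac true + ENNReal.ofReal (1 - p) • Measure.dirac false

instance (p : ℝ) : IsFiniteMeasure (bern p) := by
  constructor
  simp [bern]

/-- Product of three i.i.d. Bernoulli(`p`) hats. -/
noncomputable def hat3 (p : ℝ) : Measure (Fin 3 → Bool) := Measure.pi fun _ => bern p

/-- The winning probability of a 3-hat strategy `(g₁, g₂)` in the 3-hat game. -/
noncomputable def winProb3 (g₁ g₂ : (Fin 3 → Bool) → Fin 3) (p : ℝ) : ℝ :=
  (((hat3 p).prod (hat3 p)) {x : (Fin 3 → Bool) × (Fin 3 → Bool) |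
    x.1 (g₁ x.2) = true ∧ x.2 (g₂ x.1) = true}).toReal

/-- The optimal symmetric 3-hat strategy of Table 1 (positions 0-indexed):
`∅ ↦ 0, {0} ↦ 0, {1} ↦ 2, {0,1} ↦ 0, {2} ↦ 1, {0,2} ↦ 1, {1,2} ↦ 2, {0,1,2} ↦ 0`. -/
def optStrat3 : (Fin 3 → Bool) → Fin 3 := fun x =>
  match x 0, x 1, x 2 with
  | false, false, false => 0
  | true,  false, false => 0
  | false, true,  false => 2
  | true,  true,  false => 0
  | false, false, true  => 1
  | true,  false, true  => 1
  | false, true,  true  => 2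
  | true,  true,  true  => 0


lemma meas_sum {α : Type*} [Fintype α] [MeasurableSpace α] [MeasurableSingletonClass α]
    (μ : Measure α) (s : Set α) [DecidablePred (· ∈ s)] :
    μ s = ∑ x ∈ Finset.univ.filter (· ∈ s), μ {x} := by
  have := sum_measure_preimage_singleton (μ := μ) (f := id)
    (Finset.univ.filter (· ∈ s)) (fun y _ => measurableSet_eq)
  simp only [Set.preimage_id] at this
  rw [this]
  congr 1
  ext x
  simp

lemma hat3_singleton (p : ℝ) (a : Fin 3 → Bool) :
    hat3 p {a} = ∏ i, bern p {a i} := by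
  rw [← Set.univ_pi_singleton a, hat3, Measure.pi_pi]

lemma bern_single (p : ℝ) (b : Bool) :
    bern p {b} = ENNReal.ofReal (if b then p else 1 - p) := by
  cases b <;> simp [bern, Measure.dirac_apply']

lemma sum_fn3 {M : Type*} [AddCommMonoid M] (f : (Fin 3 → Bool) → M) :
    ∑ x, f x = ∑ y : Bool × Bool × Bool, f ![y.1, y.2.1, y.2.2] :=
  (Fintype.sum_bijective (fun y : Bool × Bool × Bool => ![y.1, y.2.1, y.2.2])
    (by decide) _ _ (fun y => rfl)).symm

instance (p : ℝ) : SFinite (hat3 p) := by unfold hat3; infer_instance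

lemma optStrat3_winProb_aux (p : ℝ) (hp : p ∈ Set.Icc (0 : ℝ) 1) :
    winProb3 optStrat3 optStrat3 p =
      3 * p ^ 2 - 6 * p ^ 3 + 8 * p ^ 4 - 6 * p ^ 5 + 2 * p ^ 6 := by
  classical
  obtain ⟨hp0, hp1⟩ := hp
  have hq0 : 0 ≤ 1 - p := by linarith
  set f : Bool → ℝ := fun b => if b then p else 1 - p with hf
  have hf0 : ∀ b, 0 ≤ f b := by intro b; cases b <;> simp [hf, hp0, hq0]
  rw [winProb3, meas_sum]
  have hterm : ∀ x : (Fin 3 → Bool) × (Fin 3 → Bool),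
      ((hat3 p).prod (hat3 p)) {x} = ENNReal.ofReal ((∏ i, f (x.1 i)) * ∏ i, f (x.2 i)) := by
    intro x
    have : ({x} : Set _) = {x.1} ×ˢ {x.2} := by simp
    rw [this, Measure.prod_prod, hat3_singleton, hat3_singleton]
    simp only [bern_single]
    rw [← ENNReal.ofReal_prod_of_nonneg (fun i _ => hf0 _),
        ← ENNReal.ofReal_prod_of_nonneg (fun i _ => hf0 _),
        ← ENNReal.ofReal_mul (Finset.prod_nonneg fun i _ => hf0 _)]
  simp only [hterm]
  rw [ENNReal.toReal_sum (by intro a _; exact ENNReal.ofReal_ne_top)]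
  have hnn : ∀ x : (Fin 3 → Bool) × (Fin 3 → Bool),
      (ENNReal.ofReal ((∏ i, f (x.1 i)) * ∏ i, f (x.2 i))).toReal
        = (∏ i, f (x.1 i)) * ∏ i, f (x.2 i) := by
    intro x
    exact ENNReal.toReal_ofReal (mul_nonneg (Finset.prod_nonneg fun i _ => hf0 _)
      (Finset.prod_nonneg fun i _ => hf0 _))
  simp only [hnn]
  rw [Finset.sum_filter]
  rw [Fintype.sum_prod_type]
  simp only [sum_fn3]
  simp only [Fintype.sum_prod_type, Fintype.sum_bool, Fin.prod_univ_three,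
    Matrix.cons_val_zero, Matrix.cons_val_one, Matrix.head_cons, Matrix.cons_val_two,
    Matrix.tail_cons, Set.mem_setOf_eq, optStrat3]
  norm_num [hf]
  ring

/-- The symmetric 3-hat strategy `(optStrat3, optStrat3)` wins with probability
`3p²q⁴ + 6p³q³ + 8p⁴q² + 4p⁵q + p⁶ = 3p² − 6p³ + 8p⁴ − 6p⁵ + 2p⁶` where `q = 1 − p`. -/
theorem optStrat3_winProb (p : ℝ) (hp : p ∈ Set.Icc (0 : ℝ) 1) :
    winProb3 optStrat3 optStrat3 p =
      3 * p ^ 2 * (1 - p) ^ 4 + 6 * p ^ 3 * (1 - p) ^ 3 + 8 * p ^ 4 * (1 - p) ^ 2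
        + 4 * p ^ 5 * (1 - p) + p ^ 6 ∧
    winProb3 optStrat3 optStrat3 p =
      3 * p ^ 2 - 6 * p ^ 3 + 8 * p ^ 4 - 6 * p ^ 5 + 2 * p ^ 6 := by
  have h := optStrat3_winProb_aux p hp
  exact ⟨by rw [h]; ring, h⟩
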